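/- Let $n\ge 2$ and $1\le J\le n-1$, and let $w_1,\ldots,w_n$ be i.i.d. standard complex Gaussian random variables. Then there exist constants $C_2>C_1>0$, depending only on $n$ and $J$, such that for all $s_1,\ldots,s_J\in(0,1/2]$, $C_1\prod_{j=1}^J s_j \;\le\; \mathbb P\Big(\sum_{j=1}^{J}\frac{1-s_j}{s_j}\,|w_j|^2 \le \sum_{j=J+1}^{n}|w_j|^2\Big) \;\le\; C_2\prod_{j=1}^J s_j$. -/

import Mathlib

open MeasureTheory

/-- The standard complex Gaussian measure on `ℂ`, with density `e^{-|z|²}/π`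
with respect to Lebesgue measure. -/
noncomputable def stdComplexGaussian : Measure ℂ :=
  (volume : Measure ℂ).withDensity
    (fun z => ENNReal.ofReal (Real.exp (-‖z‖ ^ 2) / Real.pi))

namespace SCGaux

lemma pi_enn : (NNReal.pi : ENNReal) = ENNReal.ofReal Real.pi := by
  rw [← NNReal.coe_real_pi, ENNReal.ofReal_coe_nnreal]

lemma ball_set {t : ℝ} (ht : 0 ≤ t) :
    {z : ℂ | ‖z‖ ^ 2 ≤ t} = Metric.closedBall 0 (Real.sqrt t) := by
  ext z
  simp only [Set.mem_setOf_eq, Metric.mem_closedBall, dist_zero_right]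
  exact (Real.le_sqrt (norm_nonneg z) ht).symm

lemma meas_ball_set (t : ℝ) : MeasurableSet {z : ℂ | ‖z‖ ^ 2 ≤ t} :=
  measurableSet_le (measurable_norm.pow_const 2) measurable_const

lemma meas_tail_set (t : ℝ) : MeasurableSet {z : ℂ | t ≤ ‖z‖ ^ 2} :=
  measurableSet_le measurable_const (measurable_norm.pow_const 2)

lemma vol_ball_set {t : ℝ} (ht : 0 ≤ t) :
    (volume {z : ℂ | ‖z‖ ^ 2 ≤ t}) = ENNReal.ofReal t * ENNReal.ofReal Real.pi := by
  rw [ball_set ht, Complex.volume_closedBall, ← pi_enn, ← ENNReal.ofReal_pow (Real.sqrt_nonneg t),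
    Real.sq_sqrt ht]

lemma scg_ball_le {t : ℝ} (ht : 0 ≤ t) :
    stdComplexGaussian {z : ℂ | ‖z‖ ^ 2 ≤ t} ≤ ENNReal.ofReal t := by
  rw [stdComplexGaussian, withDensity_apply _ (meas_ball_set t)]
  calc ∫⁻ z in {z : ℂ | ‖z‖ ^ 2 ≤ t}, ENNReal.ofReal (Real.exp (-‖z‖ ^ 2) / Real.pi) ∂volume
      ≤ ∫⁻ _ in {z : ℂ | ‖z‖ ^ 2 ≤ t}, ENNReal.ofReal (1 / Real.pi) ∂volume := by
        refine setLIntegral_mono' (meas_ball_set t) fun z _ => ?_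
        apply ENNReal.ofReal_le_ofReal
        gcongr
        exact Real.exp_le_one_iff.2 (neg_nonpos.mpr (by positivity))
    _ = ENNReal.ofReal (1 / Real.pi) * (ENNReal.ofReal t * ENNReal.ofReal Real.pi) := by
        rw [setLIntegral_const, vol_ball_set ht, mul_comm]
    _ = ENNReal.ofReal t := by
        rw [← ENNReal.ofReal_mul (by positivity), ← ENNReal.ofReal_mul (by positivity)]
        congr 1
        field_simp

lemma scg_ball_ge {t : ℝ} (h0 : 0 ≤ t) (h1 : t ≤ 1) :
    ENNReal.ofReal (t * Real.exp (-1)) ≤ stdComplexGaussian {z : ℂ | ‖z‖ ^ 2 ≤ t} := by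
  rw [stdComplexGaussian, withDensity_apply _ (meas_ball_set t)]
  calc ENNReal.ofReal (t * Real.exp (-1))
      = ENNReal.ofReal (Real.exp (-1) / Real.pi) * (ENNReal.ofReal t * ENNReal.ofReal Real.pi) := by
        rw [← ENNReal.ofReal_mul (by positivity), ← ENNReal.ofReal_mul (by positivity)]
        congr 1
        field_simp
    _ = ∫⁻ _ in {z : ℂ | ‖z‖ ^ 2 ≤ t}, ENNReal.ofReal (Real.exp (-1) / Real.pi) ∂volume := by
        rw [setLIntegral_const, vol_ball_set h0, mul_comm]
    _ ≤ ∫⁻ z in {z : ℂ | ‖z‖ ^ 2 ≤ t}, ENNReal.ofReal (Real.exp (-‖z‖ ^ 2) / Real.pi) ∂volume := by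
        refine setLIntegral_mono' (meas_ball_set t) fun z hz => ?_
        apply ENNReal.ofReal_le_ofReal
        gcongr
        simp only [Set.mem_setOf_eq] at hz; linarith

end SCGaux

namespace SCGaux

lemma exp_neg_one_le_half : Real.exp (-1) ≤ 1 / 2 := by
  rw [Real.exp_neg, inv_le_iff_one_le_mul₀' (Real.exp_pos 1)]
  nlinarith [Real.add_one_le_exp 1]

lemma annulus_bound (a : ℝ) (ha : 0 ≤ a) :
    stdComplexGaussian {z : ℂ | a ≤ ‖z‖ ^ 2 ∧ ‖z‖ ^ 2 < a + 1} ≤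
      ENNReal.ofReal (Real.exp (-a)) := by
  have hA : MeasurableSet {z : ℂ | a ≤ ‖z‖ ^ 2 ∧ ‖z‖ ^ 2 < a + 1} :=
    (measurableSet_le measurable_const (measurable_norm.pow_const 2)).inter
      (measurableSet_lt (measurable_norm.pow_const 2) measurable_const)
  have hvol : volume {z : ℂ | a ≤ ‖z‖ ^ 2 ∧ ‖z‖ ^ 2 < a + 1} ≤ ENNReal.ofReal Real.pi := by
    have hsub : {z : ℂ | a ≤ ‖z‖ ^ 2 ∧ ‖z‖ ^ 2 < a + 1} ⊆
        Metric.ball (0:ℂ) (Real.sqrt (a + 1)) \ Metric.ball 0 (Real.sqrt a) := by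
      intro z hz
      obtain ⟨h1, h2⟩ := hz
      constructor
      · rw [Metric.mem_ball, dist_zero_right, ← Real.sqrt_sq (norm_nonneg z)]
        exact Real.sqrt_lt_sqrt (sq_nonneg _) h2
      · rw [Metric.mem_ball, dist_zero_right, not_lt, ← Real.sqrt_sq (norm_nonneg z)]
        exact Real.sqrt_le_sqrt h1
    refine (measure_mono hsub).trans ?_
    rw [measure_diff (Metric.ball_subset_ball (Real.sqrt_le_sqrt (by linarith)))
      measurableSet_ball.nullMeasurableSet measure_ball_lt_top.ne]
    rw [Complex.volume_ball, Complex.volume_ball, ← pi_enn.symm,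
      ← ENNReal.ofReal_pow (Real.sqrt_nonneg _), ← ENNReal.ofReal_pow (Real.sqrt_nonneg _),
      Real.sq_sqrt (by linarith), Real.sq_sqrt ha,
      ← ENNReal.ofReal_mul (by linarith), ← ENNReal.ofReal_mul ha,
      ← ENNReal.ofReal_sub _ (by positivity)]
    apply ENNReal.ofReal_le_ofReal
    nlinarith [Real.pi_pos]
  rw [stdComplexGaussian, withDensity_apply _ hA]
  calc ∫⁻ z in {z : ℂ | a ≤ ‖z‖ ^ 2 ∧ ‖z‖ ^ 2 < a + 1},
        ENNReal.ofReal (Real.exp (-‖z‖ ^ 2) / Real.pi) ∂volume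
      ≤ ∫⁻ _ in {z : ℂ | a ≤ ‖z‖ ^ 2 ∧ ‖z‖ ^ 2 < a + 1},
        ENNReal.ofReal (Real.exp (-a) / Real.pi) ∂volume := by
        refine setLIntegral_mono' hA fun z hz => ?_
        apply ENNReal.ofReal_le_ofReal
        gcongr
        exact hz.1
    _ = ENNReal.ofReal (Real.exp (-a) / Real.pi) *
        volume {z : ℂ | a ≤ ‖z‖ ^ 2 ∧ ‖z‖ ^ 2 < a + 1} := setLIntegral_const _ _
    _ ≤ ENNReal.ofReal (Real.exp (-a) / Real.pi) * ENNReal.ofReal Real.pi := by gcongr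
    _ = ENNReal.ofReal (Real.exp (-a)) := by
        rw [← ENNReal.ofReal_mul (by positivity)]
        congr 1
        field_simp

lemma scg_tail_le {t : ℝ} (ht : 0 ≤ t) :
    stdComplexGaussian {z : ℂ | t ≤ ‖z‖ ^ 2} ≤ ENNReal.ofReal (2 * Real.exp (-t)) := by
  have hsub : {z : ℂ | t ≤ ‖z‖ ^ 2} ⊆
      ⋃ k : ℕ, {z : ℂ | t + k ≤ ‖z‖ ^ 2 ∧ ‖z‖ ^ 2 < t + k + 1} := by
    intro z hz
    simp only [Set.mem_setOf_eq] at hz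
    refine Set.mem_iUnion.2 ⟨⌊‖z‖ ^ 2 - t⌋₊, ?_, ?_⟩
    · have := Nat.floor_le (sub_nonneg.2 hz)
      linarith
    · have := Nat.lt_floor_add_one (‖z‖ ^ 2 - t)
      linarith
  calc stdComplexGaussian {z : ℂ | t ≤ ‖z‖ ^ 2}
      ≤ ∑' k : ℕ, stdComplexGaussian {z : ℂ | t + k ≤ ‖z‖ ^ 2 ∧ ‖z‖ ^ 2 < t + k + 1} :=
        (measure_mono hsub).trans (measure_iUnion_le _)
    _ ≤ ∑' k : ℕ, ENNReal.ofReal (Real.exp (-t) * Real.exp (-1) ^ k) := by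
        refine ENNReal.tsum_le_tsum fun k => ?_
        refine (annulus_bound (t + k) (by positivity)).trans_eq ?_
        congr 1
        rw [← Real.exp_nat_mul, ← Real.exp_add]
        ring_nf
    _ = ENNReal.ofReal (∑' k : ℕ, Real.exp (-t) * Real.exp (-1) ^ k) := by
        refine (ENNReal.ofReal_tsum_of_nonneg (fun k => by positivity) ?_).symm
        exact (summable_geometric_of_lt_one (Real.exp_pos _).le
          (Real.exp_lt_one_iff.2 (by norm_num))).mul_left _
    _ ≤ ENNReal.ofReal (2 * Real.exp (-t)) := by
        apply ENNReal.ofReal_le_ofReal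
        rw [tsum_mul_left, tsum_geometric_of_lt_one (Real.exp_pos _).le
          (Real.exp_lt_one_iff.2 (by norm_num))]
        have h1 : Real.exp (-1) ≤ 1 / 2 := exp_neg_one_le_half
        have h2 : (0:ℝ) < 1 - Real.exp (-1) := by nlinarith
        have h3 : (1 - Real.exp (-1))⁻¹ ≤ 2 := by
          rw [inv_le_iff_one_le_mul₀' h2]
          nlinarith
        calc Real.exp (-t) * (1 - Real.exp (-1))⁻¹ ≤ Real.exp (-t) * 2 :=
              mul_le_mul_of_nonneg_left h3 (Real.exp_pos _).le
          _ = 2 * Real.exp (-t) := mul_comm _ _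

end SCGaux

namespace SCGaux

lemma scg_tail_ge :
    ENNReal.ofReal (3 * Real.exp (-4)) ≤ stdComplexGaussian {z : ℂ | 1 ≤ ‖z‖ ^ 2} := by
  set D : Set ℂ := Metric.closedBall (0:ℂ) 2 \ Metric.ball 0 1 with hD
  have hDmeas : MeasurableSet D := measurableSet_closedBall.diff measurableSet_ball
  have hsub : D ⊆ {z : ℂ | 1 ≤ ‖z‖ ^ 2} := by
    intro z hz
    obtain ⟨_, h2⟩ := hz
    simp only [Metric.mem_ball, dist_zero_right, not_lt] at h2
    simp only [Set.mem_setOf_eq]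
    nlinarith [norm_nonneg z]
  have hvol : volume D = ENNReal.ofReal (3 * Real.pi) := by
    rw [hD, measure_diff (Metric.ball_subset_closedBall.trans
        (Metric.closedBall_subset_closedBall (by norm_num)))
        measurableSet_ball.nullMeasurableSet measure_ball_lt_top.ne,
      Complex.volume_closedBall, Complex.volume_ball, ← pi_enn.symm,
      ← ENNReal.ofReal_pow (by norm_num), ← ENNReal.ofReal_pow (by norm_num),
      ← ENNReal.ofReal_mul (by norm_num), ← ENNReal.ofReal_mul (by norm_num),
      ← ENNReal.ofReal_sub _ (by positivity)]
    congr 1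
    ring
  calc ENNReal.ofReal (3 * Real.exp (-4))
      = ENNReal.ofReal (Real.exp (-4) / Real.pi) * ENNReal.ofReal (3 * Real.pi) := by
        rw [← ENNReal.ofReal_mul (by positivity)]
        congr 1
        field_simp
    _ = ∫⁻ _ in D, ENNReal.ofReal (Real.exp (-4) / Real.pi) ∂volume := by
        rw [setLIntegral_const, hvol]
    _ ≤ ∫⁻ z in D, ENNReal.ofReal (Real.exp (-‖z‖ ^ 2) / Real.pi) ∂volume := by
        refine setLIntegral_mono' hDmeas fun z hz => ?_
        apply ENNReal.ofReal_le_ofReal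
        obtain ⟨h1, _⟩ := hz
        simp only [Metric.mem_closedBall, dist_zero_right] at h1
        gcongr
        nlinarith [norm_nonneg z]
    _ ≤ stdComplexGaussian {z : ℂ | 1 ≤ ‖z‖ ^ 2} := by
        rw [stdComplexGaussian, withDensity_apply _ (meas_tail_set 1)]
        exact lintegral_mono_set hsub

end SCGaux

namespace SCGaux

lemma filter_lt_eq_map {n J : ℕ} (h : J ≤ n) :
    Finset.univ.filter (fun i : Fin n => (i : ℕ) < J) =
      Finset.map (Fin.castLEEmb h) Finset.univ := by
  ext i
  simp only [Finset.mem_filter, Finset.mem_univ, true_and, Finset.mem_map]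
  constructor
  · intro hi
    exact ⟨⟨(i : ℕ), hi⟩, by ext; simp [Fin.castLE]⟩
  · rintro ⟨j, rfl⟩
    exact j.isLt

lemma prod_filter_lt {M : Type*} [CommMonoid M] {n J : ℕ} (h : J ≤ n) (f : Fin n → M) :
    ∏ i ∈ Finset.univ.filter (fun i : Fin n => (i : ℕ) < J), f i
      = ∏ j : Fin J, f (Fin.castLE h j) := by
  rw [filter_lt_eq_map h, Finset.prod_map]
  rfl

end SCGaux


open SCGaux

theorem stmt_9 (n J : ℕ) (hn : 2 ≤ n) (hJ1 : 1 ≤ J) (hJn : J ≤ n - 1)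
    {Ω : Type*} [MeasurableSpace Ω] (μ : Measure Ω) [IsProbabilityMeasure μ]
    (w : Fin n → Ω → ℂ) (hwmeas : ∀ j, Measurable (w j))
    (hiid : ProbabilityTheory.iIndepFun w μ)
    (hlaw : ∀ j, μ.map (w j) = stdComplexGaussian) :
    ∃ C1 C2 : ℝ, 0 < C1 ∧ C1 < C2 ∧
      ∀ s : Fin J → ℝ, (∀ j, s j ∈ Set.Ioc (0 : ℝ) (1 / 2)) →
        C1 * ∏ j, s j ≤
            (μ {ω | ∑ j : Fin J, ((1 - s j) / s j) *
                ‖w (Fin.castLE (by omega : J ≤ n) j) ω‖ ^ 2 ≤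
              ∑ j ∈ Finset.univ.filter (fun j : Fin n => J ≤ (j : ℕ)),
                ‖w j ω‖ ^ 2}).toReal ∧
          (μ {ω | ∑ j : Fin J, ((1 - s j) / s j) *
                ‖w (Fin.castLE (by omega : J ≤ n) j) ω‖ ^ 2 ≤
              ∑ j ∈ Finset.univ.filter (fun j : Fin n => J ≤ (j : ℕ)),
                ‖w j ω‖ ^ 2}).toReal ≤ C2 * ∏ j, s j := by
  have hJn' : J < n := by omega
  have hle : J ≤ n := hJn'.le
  have hJR : (0:ℝ) < J := by exact_mod_cast hJ1
  have hnR : (0:ℝ) < n := by positivity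
  have hpre : ∀ (i : Fin n) (B : Set ℂ), MeasurableSet B →
      μ (w i ⁻¹' B) = stdComplexGaussian B := by
    intro i B hB
    rw [← hlaw i, Measure.map_apply (hwmeas i) hB]
  -- constants
  set c1 : ℝ := 3 * Real.exp (-4) * (Real.exp (-1) / J) ^ J with hc1def
  have hc1pos : 0 < c1 := by positivity
  set r : ℝ := Real.exp (-(1 / (n:ℝ))) with hrdef
  have hr0 : 0 ≤ r := (Real.exp_pos _).le
  have hrne : r ≠ 0 := (Real.exp_pos _).ne'
  have hr1 : r < 1 := Real.exp_lt_one_iff.2 (neg_lt_zero.mpr (by positivity))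
  set c : ℕ → ℝ := fun k => (n:ℝ) * (2 * r ^ k * (2 * ((k:ℝ) + 1)) ^ J) with hcdef
  have hcnonneg : ∀ k, 0 ≤ c k := fun k => by positivity
  have hsum : Summable c := by
    have base : Summable (fun k : ℕ => (k:ℝ) ^ J * r ^ k) :=
      summable_pow_mul_geometric_of_norm_lt_one J
        (by rw [Real.norm_of_nonneg hr0]; exact hr1)
    have h1 : Summable (fun k : ℕ => ((k:ℝ) + 1) ^ J * r ^ (k + 1)) := by
      have := (summable_nat_add_iff 1).mpr base
      refine this.congr fun k => ?_
      push_cast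
      ring
    have h2 : Summable (fun k : ℕ => ((k:ℝ) + 1) ^ J * r ^ k) := by
      have := h1.mul_left r⁻¹
      refine this.congr fun k => ?_
      rw [pow_succ]
      field_simp
    have h3 := h2.mul_left ((n:ℝ) * 2 * 2 ^ J)
    refine h3.congr fun k => ?_
    simp only [hcdef, mul_pow]
    ring
  set c2 : ℝ := ∑' k, c k with hc2def
  have hc2nonneg : 0 ≤ c2 := tsum_nonneg hcnonneg
  refine ⟨c1, c2 + c1 + 1, hc1pos, by linarith, ?_⟩
  intro s hs
  have hs0 : ∀ j, 0 < s j := fun j => (hs j).1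
  have hs2 : ∀ j, s j ≤ 1 / 2 := fun j => (hs j).2
  have hP : 0 < ∏ j, s j := Finset.prod_pos fun j _ => hs0 j
  -- auxiliary definitions
  set s' : Fin n → ℝ := fun i => if h : (i : ℕ) < J then s ⟨i, h⟩ else 1 with hs'def
  have hs'cast : ∀ j : Fin J, s' (Fin.castLE hle j) = s j := by
    intro j
    simp only [hs'def, Fin.castLE]
    rw [dif_pos j.isLt]
  have hs'pos : ∀ i : Fin n, (i : ℕ) < J → 0 < s' i := by
    intro i hi
    simp only [hs'def]
    rw [dif_pos hi]
    exact hs0 _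
  have hs'half : ∀ i : Fin n, (i : ℕ) < J → s' i ≤ 1 / 2 := by
    intro i hi
    simp only [hs'def]
    rw [dif_pos hi]
    exact hs2 _
  set T' : Finset (Fin n) := Finset.univ.filter (fun i : Fin n => (i : ℕ) < J) with hT'def
  set Tn : Finset (Fin n) := Finset.univ.filter (fun i : Fin n => J ≤ (i : ℕ)) with hTndef
  set iJ : Fin n := ⟨J, hJn'⟩ with hiJdef
  have hiJT' : iJ ∉ T' := by simp [hT'def, hiJdef]
  have hiJTn : iJ ∈ Tn := by simp [hTndef, hiJdef]
  set Ev : Set Ω := {ω | ∑ j : Fin J, ((1 - s j) / s j) *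
      ‖w (Fin.castLE hle j) ω‖ ^ 2 ≤ ∑ j ∈ Tn, ‖w j ω‖ ^ 2} with hEvdef
  have hterm_nonneg : ∀ (ω : Ω) (j : Fin J),
      0 ≤ ((1 - s j) / s j) * ‖w (Fin.castLE hle j) ω‖ ^ 2 := by
    intro ω j
    apply mul_nonneg
    · apply div_nonneg (by linarith [hs2 j]) (hs0 j).le
    · positivity
  constructor
  · -- LOWER BOUND
    show c1 * ∏ j, s j ≤ (μ Ev).toReal
    set B : Fin n → Set ℂ := fun i =>
      if (i : ℕ) < J then {z : ℂ | ‖z‖ ^ 2 ≤ s' i / J} else {z : ℂ | 1 ≤ ‖z‖ ^ 2} with hBdef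
    have hBmeas : ∀ i, MeasurableSet (B i) := by
      intro i
      simp only [hBdef]
      split_ifs
      · exact meas_ball_set _
      · exact meas_tail_set _
    set g : Fin n → Set Ω := fun i => w i ⁻¹' B i with hgdef
    have hsubEv : (⋂ i ∈ insert iJ T', g i) ⊆ Ev := by
      intro ω hω
      simp only [Set.mem_iInter] at hω
      have hsum1 : ∑ j : Fin J, ((1 - s j) / s j) * ‖w (Fin.castLE hle j) ω‖ ^ 2 ≤ 1 := by
        calc ∑ j : Fin J, ((1 - s j) / s j) * ‖w (Fin.castLE hle j) ω‖ ^ 2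
            ≤ ∑ _j : Fin J, (1 : ℝ) / J := by
              refine Finset.sum_le_sum fun j _ => ?_
              have hmem : Fin.castLE hle j ∈ insert iJ T' := by
                refine Finset.mem_insert_of_mem ?_
                simp [hT'def, Fin.castLE, j.isLt]
              have hω' := hω _ hmem
              have hB : w (Fin.castLE hle j) ω ∈ B (Fin.castLE hle j) := hω'
              have hlt : ((Fin.castLE hle j : Fin n) : ℕ) < J := j.isLt
              simp only [hBdef] at hB
              rw [if_pos hlt] at hB
              simp only [Set.mem_setOf_eq] at hB
              rw [hs'cast j] at hB
              calc ((1 - s j) / s j) * ‖w (Fin.castLE hle j) ω‖ ^ 2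
                  ≤ ((1 - s j) / s j) * (s j / J) := by
                    apply mul_le_mul_of_nonneg_left hB
                    apply div_nonneg (by linarith [hs2 j]) (hs0 j).le
                _ = (1 - s j) / J := by
                    rw [div_mul_div_comm, mul_comm (1 - s j) (s j),
                      mul_div_mul_left _ _ (hs0 j).ne']
                _ ≤ 1 / J := by
                    gcongr
                    linarith [hs0 j]
          _ = 1 := by
              rw [Finset.sum_const, Finset.card_univ, Fintype.card_fin, nsmul_eq_mul]
              field_simp
      have htail : (1:ℝ) ≤ ‖w iJ ω‖ ^ 2 := by
        have hω' := hω iJ (Finset.mem_insert_self _ _)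
        have hB : w iJ ω ∈ B iJ := hω'
        simp only [hBdef] at hB
        rw [if_neg (by simp [hiJdef])] at hB
        exact hB
      have hsingle : ‖w iJ ω‖ ^ 2 ≤ ∑ j ∈ Tn, ‖w j ω‖ ^ 2 :=
        Finset.single_le_sum (f := fun i : Fin n => ‖w i ω‖ ^ 2)
          (fun i _ => by positivity) hiJTn
      simp only [hEvdef, Set.mem_setOf_eq]
      linarith
    have hindep : μ (⋂ i ∈ insert iJ T', g i) = ∏ i ∈ insert iJ T', μ (g i) :=
      hiid.meas_biInter fun i _ => ⟨B i, hBmeas i, rfl⟩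
    have hlowball : ∀ i ∈ T', ENNReal.ofReal (s' i * (Real.exp (-1) / J)) ≤ μ (g i) := by
      intro i hi
      have hilt : (i : ℕ) < J := by simpa [hT'def] using hi
      have hgi : μ (g i) = stdComplexGaussian {z : ℂ | ‖z‖ ^ 2 ≤ s' i / J} := by
        simp only [hgdef, hBdef]
        rw [if_pos hilt]
        exact hpre i _ (meas_ball_set _)
      rw [hgi]
      have h0 : 0 ≤ s' i / J := div_nonneg (hs'pos i hilt).le hJR.le
      have h1 : s' i / J ≤ 1 := by
        rw [div_le_one hJR]
        have := hs'half i hilt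
        have hJ1' : (1:ℝ) ≤ J := by exact_mod_cast hJ1
        linarith
      refine le_trans ?_ (scg_ball_ge h0 h1)
      apply ENNReal.ofReal_le_ofReal
      rw [div_mul_eq_mul_div, mul_div_assoc]
    have hlowtail : ENNReal.ofReal (3 * Real.exp (-4)) ≤ μ (g iJ) := by
      have hgi : μ (g iJ) = stdComplexGaussian {z : ℂ | 1 ≤ ‖z‖ ^ 2} := by
        simp only [hgdef, hBdef]
        rw [if_neg (by simp [hiJdef])]
        exact hpre iJ _ (meas_tail_set _)
      rw [hgi]
      exact scg_tail_ge
    have hprod : ENNReal.ofReal (c1 * ∏ j, s j) ≤ μ (⋂ i ∈ insert iJ T', g i) := by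
      rw [hindep, Finset.prod_insert hiJT']
      have hp1 : ENNReal.ofReal ((∏ j, s j) * (Real.exp (-1) / J) ^ J) ≤
          ∏ i ∈ T', μ (g i) := by
        calc ENNReal.ofReal ((∏ j, s j) * (Real.exp (-1) / J) ^ J)
            = ENNReal.ofReal (∏ i ∈ T', s' i * (Real.exp (-1) / J)) := by
              congr 1
              rw [prod_filter_lt hle (fun i => s' i * (Real.exp (-1) / J)),
                Finset.prod_mul_distrib, Finset.prod_const, Finset.card_univ,
                Fintype.card_fin]
              congr 1
              exact Finset.prod_congr rfl fun j _ => (hs'cast j).symm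
          _ = ∏ i ∈ T', ENNReal.ofReal (s' i * (Real.exp (-1) / J)) := by
              refine ENNReal.ofReal_prod_of_nonneg fun i hi => ?_
              have hilt : (i : ℕ) < J := by simpa [hT'def] using hi
              have := hs'pos i hilt
              positivity
          _ ≤ ∏ i ∈ T', μ (g i) := Finset.prod_le_prod' hlowball
      calc ENNReal.ofReal (c1 * ∏ j, s j)
          = ENNReal.ofReal (3 * Real.exp (-4)) *
            ENNReal.ofReal ((∏ j, s j) * (Real.exp (-1) / J) ^ J) := by
            rw [← ENNReal.ofReal_mul (by positivity)]
            congr 1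
            rw [hc1def]
            ring
        _ ≤ μ (g iJ) * ∏ i ∈ T', μ (g i) := mul_le_mul' hlowtail hp1
    have hfin : ENNReal.ofReal (c1 * ∏ j, s j) ≤ μ Ev :=
      hprod.trans (measure_mono hsubEv)
    have := ENNReal.toReal_mono (measure_ne_top μ Ev) hfin
    rwa [ENNReal.toReal_ofReal (by positivity)] at this
  · -- UPPER BOUND
    show (μ Ev).toReal ≤ (c2 + c1 + 1) * ∏ j, s j
    set Sf : Ω → ℝ := fun ω => ∑ i ∈ Tn, ‖w i ω‖ ^ 2 with hSfdef
    have hSf0 : ∀ ω, 0 ≤ Sf ω := fun ω => Finset.sum_nonneg fun i _ => by positivity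
    have hcover : Ev ⊆ ⋃ k : ℕ, (Ev ∩ {ω | (k:ℝ) ≤ Sf ω ∧ Sf ω < k + 1}) := by
      intro ω hω
      exact Set.mem_iUnion.2 ⟨⌊Sf ω⌋₊, hω, Nat.floor_le (hSf0 ω), Nat.lt_floor_add_one _⟩
    have hkey : ∀ k : ℕ, μ (Ev ∩ {ω | (k:ℝ) ≤ Sf ω ∧ Sf ω < k + 1}) ≤
        ENNReal.ofReal (c k * ∏ j, s j) := by
      intro k
      set BB : Fin n → Set ℂ := fun i =>
        if (i : ℕ) < J then {z : ℂ | ‖z‖ ^ 2 ≤ 2 * ((k:ℝ) + 1) * s' i}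
        else {z : ℂ | (k:ℝ) / n ≤ ‖z‖ ^ 2} with hBBdef
      have hBBmeas : ∀ i, MeasurableSet (BB i) := by
        intro i
        simp only [hBBdef]
        split_ifs
        · exact meas_ball_set _
        · exact meas_tail_set _
      set g : Fin n → Set Ω := fun i => w i ⁻¹' BB i with hgdef
      have hsub2 : Ev ∩ {ω | (k:ℝ) ≤ Sf ω ∧ Sf ω < k + 1} ⊆
          ⋃ i ∈ Tn, ⋂ j ∈ insert i T', g j := by
        rintro ω ⟨hωE, hk1, hk2⟩
        simp only [hEvdef, Set.mem_setOf_eq] at hωE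
        have hsmall : ∀ i ∈ T', ω ∈ g i := by
          intro i hi
          have hilt : (i : ℕ) < J := by simpa [hT'def] using hi
          set j : Fin J := ⟨(i : ℕ), hilt⟩ with hjdef
          have hcast : Fin.castLE hle j = i := by ext; rfl
          have hone : ((1 - s j) / s j) * ‖w (Fin.castLE hle j) ω‖ ^ 2 ≤ (k:ℝ) + 1 := by
            have h1 : ((1 - s j) / s j) * ‖w (Fin.castLE hle j) ω‖ ^ 2 ≤
                ∑ j' : Fin J, ((1 - s j') / s j') * ‖w (Fin.castLE hle j') ω‖ ^ 2 :=
              Finset.single_le_sum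
                (f := fun j' : Fin J => ((1 - s j') / s j') * ‖w (Fin.castLE hle j') ω‖ ^ 2)
                (fun j' _ => hterm_nonneg ω j') (Finset.mem_univ j)
            linarith
          have hx0 : (0:ℝ) ≤ ‖w (Fin.castLE hle j) ω‖ ^ 2 := by positivity
          have hprod1 : ((1 - s j) / s j * ‖w (Fin.castLE hle j) ω‖ ^ 2) * s j =
              (1 - s j) * ‖w (Fin.castLE hle j) ω‖ ^ 2 := by
            field_simp [(hs0 j).ne']
          have hprod2 := mul_le_mul_of_nonneg_right hone (hs0 j).le
          rw [hprod1] at hprod2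
          have hprod3 : s j * ‖w (Fin.castLE hle j) ω‖ ^ 2 ≤
              (1/2) * ‖w (Fin.castLE hle j) ω‖ ^ 2 :=
            mul_le_mul_of_nonneg_right (hs2 j) hx0
          have hnb : ‖w (Fin.castLE hle j) ω‖ ^ 2 ≤ 2 * ((k:ℝ) + 1) * s j := by nlinarith
          show ω ∈ g i
          simp only [hgdef, hBBdef, Set.mem_preimage]
          rw [if_pos hilt]
          have hs'i : s' i = s j := by
            simp only [hs'def]
            rw [dif_pos hilt]
          rw [Set.mem_setOf_eq, hs'i]
          rw [hcast] at hnb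
          exact hnb
        have hbig : ∃ i ∈ Tn, (k:ℝ) / n ≤ ‖w i ω‖ ^ 2 := by
          by_contra hcon
          push_neg at hcon
          have hlt : Sf ω < ∑ _i ∈ Tn, (k:ℝ) / n :=
            Finset.sum_lt_sum_of_nonempty ⟨iJ, hiJTn⟩ hcon
          rw [Finset.sum_const, nsmul_eq_mul] at hlt
          have hcard : (Tn.card : ℝ) ≤ n := by
            exact_mod_cast (Finset.card_le_univ Tn).trans_eq (by simp)
          have hkn : (0:ℝ) ≤ (k:ℝ)/n := by positivity
          have : Sf ω < (k:ℝ) := by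
            have h2 : (Tn.card : ℝ) * ((k:ℝ)/n) ≤ (n:ℝ) * ((k:ℝ)/n) :=
              mul_le_mul_of_nonneg_right hcard hkn
            have h3 : (n:ℝ) * ((k:ℝ)/n) = k := by field_simp
            linarith
          linarith
        obtain ⟨i0, hi0Tn, hi0⟩ := hbig
        refine Set.mem_biUnion hi0Tn ?_
        refine Set.mem_biInter fun j hj => ?_
        rcases Finset.mem_insert.1 hj with rfl | hjT'
        · have hnlt : ¬ ((j : ℕ) < J) := not_lt.2 (by simpa [hTndef] using hi0Tn)
          simp only [hgdef, hBBdef, Set.mem_preimage]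
          rw [if_neg hnlt]
          exact hi0
        · exact hsmall j hjT'
      calc μ (Ev ∩ {ω | (k:ℝ) ≤ Sf ω ∧ Sf ω < k + 1})
          ≤ μ (⋃ i ∈ Tn, ⋂ j ∈ insert i T', g j) := measure_mono hsub2
        _ ≤ ∑ i ∈ Tn, μ (⋂ j ∈ insert i T', g j) := measure_biUnion_finset_le _ _
        _ ≤ ∑ _i ∈ Tn, ENNReal.ofReal
            ((2 * r ^ k) * ((2 * ((k:ℝ) + 1)) ^ J * ∏ j, s j)) := by
            refine Finset.sum_le_sum fun i hi => ?_
            have hiJle : J ≤ (i : ℕ) := by simpa [hTndef] using hi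
            have hiT' : i ∉ T' := by
              simp only [hT'def, Finset.mem_filter, Finset.mem_univ, true_and]
              omega
            rw [hiid.meas_biInter (fun j _ => ⟨BB j, hBBmeas j, rfl⟩),
              Finset.prod_insert hiT']
            have htail : μ (g i) ≤ ENNReal.ofReal (2 * r ^ k) := by
              have hgi : μ (g i) = stdComplexGaussian {z : ℂ | (k:ℝ)/n ≤ ‖z‖ ^ 2} := by
                simp only [hgdef, hBBdef]
                rw [if_neg (not_lt.2 hiJle)]
                exact hpre i _ (meas_tail_set _)
              rw [hgi]
              refine (scg_tail_le (by positivity)).trans_eq ?_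
              congr 1
              rw [hrdef, ← Real.exp_nat_mul]
              congr 1
              field_simp
            have hballs : ∏ j ∈ T', μ (g j) ≤
                ENNReal.ofReal ((2 * ((k:ℝ) + 1)) ^ J * ∏ j, s j) := by
              calc ∏ j ∈ T', μ (g j)
                  ≤ ∏ j ∈ T', ENNReal.ofReal (2 * ((k:ℝ) + 1) * s' j) := by
                    refine Finset.prod_le_prod' fun i2 hi2 => ?_
                    have hilt : (i2 : ℕ) < J := by simpa [hT'def] using hi2
                    have hgi : μ (g i2) =
                        stdComplexGaussian {z : ℂ | ‖z‖ ^ 2 ≤ 2 * ((k:ℝ) + 1) * s' i2} := by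
                      simp only [hgdef, hBBdef]
                      rw [if_pos hilt]
                      exact hpre i2 _ (meas_ball_set _)
                    rw [hgi]
                    exact scg_ball_le (mul_nonneg (by positivity) (hs'pos i2 hilt).le)
                _ = ENNReal.ofReal (∏ j ∈ T', (2 * ((k:ℝ) + 1) * s' j)) := by
                    refine (ENNReal.ofReal_prod_of_nonneg fun i2 hi2 => ?_).symm
                    have hilt : (i2 : ℕ) < J := by simpa [hT'def] using hi2
                    exact mul_nonneg (by positivity) (hs'pos i2 hilt).le
                _ = ENNReal.ofReal ((2 * ((k:ℝ) + 1)) ^ J * ∏ j, s j) := by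
                    congr 1
                    rw [prod_filter_lt hle (fun i2 => 2 * ((k:ℝ) + 1) * s' i2),
                      Finset.prod_mul_distrib, Finset.prod_const, Finset.card_univ,
                      Fintype.card_fin]
                    congr 1
                    exact Finset.prod_congr rfl fun j _ => hs'cast j
            calc μ (g i) * ∏ j ∈ T', μ (g j)
                ≤ ENNReal.ofReal (2 * r ^ k) *
                  ENNReal.ofReal ((2 * ((k:ℝ) + 1)) ^ J * ∏ j, s j) :=
                  mul_le_mul' htail hballs
              _ = ENNReal.ofReal
                  ((2 * r ^ k) * ((2 * ((k:ℝ) + 1)) ^ J * ∏ j, s j)) :=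
                  (ENNReal.ofReal_mul (by positivity)).symm
        _ ≤ ∑ _i : Fin n, ENNReal.ofReal
            ((2 * r ^ k) * ((2 * ((k:ℝ) + 1)) ^ J * ∏ j, s j)) :=
            Finset.sum_le_sum_of_subset (Finset.subset_univ Tn)
        _ = ENNReal.ofReal (c k * ∏ j, s j) := by
            rw [Finset.sum_const, Finset.card_univ, Fintype.card_fin, nsmul_eq_mul,
              ← ENNReal.ofReal_natCast n, ← ENNReal.ofReal_mul (by positivity)]
            congr 1
            simp only [hcdef]
            ring
    have htot : μ Ev ≤ ENNReal.ofReal (c2 * ∏ j, s j) := by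
      calc μ Ev ≤ μ (⋃ k : ℕ, (Ev ∩ {ω | (k:ℝ) ≤ Sf ω ∧ Sf ω < k + 1})) :=
            measure_mono hcover
        _ ≤ ∑' k : ℕ, μ (Ev ∩ {ω | (k:ℝ) ≤ Sf ω ∧ Sf ω < k + 1}) := measure_iUnion_le _
        _ ≤ ∑' k : ℕ, ENNReal.ofReal (c k * ∏ j, s j) := ENNReal.tsum_le_tsum hkey
        _ = ENNReal.ofReal (∑' k : ℕ, c k * ∏ j, s j) :=
            (ENNReal.ofReal_tsum_of_nonneg (fun k => mul_nonneg (hcnonneg k) hP.le)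
              (hsum.mul_right _)).symm
        _ = ENNReal.ofReal (c2 * ∏ j, s j) := by rw [tsum_mul_right]
    refine le_trans (ENNReal.toReal_le_of_le_ofReal
      (mul_nonneg hc2nonneg hP.le) htot) ?_
    exact mul_le_mul_of_nonneg_right (by linarith) hP.le
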